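/- Let S and A be standard Borel spaces, π : S → ProbabilityMeasure A a measurable family of probability measures, and b a Borel probability measure on S. Let π̄ := b.bind π be the mixture measure on A (π̄(E) = ∫_S π(s)(E) db(s)). Then for every probability measure q on A: ∫_S KL(π(s) ‖ q) db(s) ≥ ∫_S KL(π(s) ‖ π̄) db(s), where KL denotes the Kullback–Leibler divergence (with values in [0,∞]). In other words, the mixture π̄ minimizes q ↦ E_{s~b}[KL(π(s) ‖ q)] over all probability measures q on A. -/

import Mathlib

open MeasureTheory Classical
open ProbabilityTheory

/-- The Kullback–Leibler divergence `KL(μ ‖ ν)`, with values in `[0, ∞]`: if `μ ≪ ν` it is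
`∫ φ(dμ/dν) dν` where `φ(t) = t log t − t + 1 ≥ 0` (which equals `∫ log(dμ/dν) dμ` for
probability measures), and `∞` otherwise. -/
noncomputable def klDiv {α : Type*} [MeasurableSpace α] (μ ν : Measure α) : ENNReal :=
  if μ ≪ ν then
    ∫⁻ x, ENNReal.ofReal ((μ.rnDeriv ν x).toReal * Real.log (μ.rnDeriv ν x).toReal
      - (μ.rnDeriv ν x).toReal + 1) ∂ν
  else ⊤

lemma phi_nonneg {t : ℝ} (ht : 0 ≤ t) : 0 ≤ t * Real.log t - t + 1 := by
  rcases eq_or_lt_of_le ht with h0 | h0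
  · simp [← h0]
  · have h1 : Real.log t⁻¹ ≤ t⁻¹ - 1 := Real.log_le_sub_one_of_pos (by positivity)
    rw [Real.log_inv] at h1
    have h2 : 1 - t⁻¹ ≤ Real.log t := by linarith
    have h3 : t * (1 - t⁻¹) ≤ t * Real.log t := mul_le_mul_of_nonneg_left h2 h0.le
    have h4 : t * (1 - t⁻¹) = t - 1 := by field_simp
    linarith

lemma phi_scale {t r : ℝ} (ht : 0 ≤ t) (hr : 0 < r) :
    r * (t / r * Real.log (t / r) - t / r + 1)
      = (t * Real.log t - t + 1) - t * Real.log r + (r - 1) := by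
  rcases eq_or_lt_of_le ht with h0 | h0
  · simp [← h0]
  · rw [Real.log_div (ne_of_gt h0) (ne_of_gt hr)]
    field_simp
    ring


/-- **Appendix D (KL loss).** The mixture `π̄ = b.bind π` minimizes
`q ↦ E_{s ~ b}[KL(π(s) ‖ q)]` over all probability measures `q`. -/
theorem mixture_minimizes_kl {S A : Type*}
    [MeasurableSpace S] [StandardBorelSpace S]
    [MeasurableSpace A] [StandardBorelSpace A]
    (π : S → Measure A) (hπ_prob : ∀ s, IsProbabilityMeasure (π s))
    (hπ_meas : Measurable π)
    (b : Measure S) [IsProbabilityMeasure b] :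
    ∀ q : Measure A, IsProbabilityMeasure q →
      (∫⁻ s, klDiv (π s) (b.bind π) ∂b) ≤ ∫⁻ s, klDiv (π s) q ∂b := by
  intro q hq
  set Φ : ENNReal → ENNReal :=
    fun t => ENNReal.ofReal (t.toReal * Real.log t.toReal - t.toReal + 1) with hΦ_def
  have hΦ : Measurable Φ :=
    ENNReal.measurable_ofReal.comp
      (((ENNReal.measurable_toReal.mul
        (Real.measurable_log.comp ENNReal.measurable_toReal)).sub
        ENNReal.measurable_toReal).add measurable_const)
  have hkl : ∀ (μ ν : Measure A), klDiv μ ν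
      = if μ ≪ ν then ∫⁻ x, Φ (μ.rnDeriv ν x) ∂ν else ⊤ := fun μ ν => rfl
  set pb : Measure A := b.bind π with hpb_def
  set κ : Kernel S A := ⟨π, hπ_meas⟩ with hκ_def
  have hκ : ∀ s, κ s = π s := fun s => rfl
  have hκM : IsMarkovKernel κ := ⟨fun s => hπ_prob s⟩
  have hpb_apply : ∀ {E : Set A}, MeasurableSet E → pb E = ∫⁻ s, π s E ∂b :=
    fun hE => Measure.bind_apply hE hπ_meas.aemeasurable
  have hpb_prob : IsProbabilityMeasure pb := by
    constructor
    rw [hpb_apply MeasurableSet.univ]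
    simp [fun s => (hπ_prob s).measure_univ]
  by_cases hAC : ∀ᵐ s ∂b, π s ≪ q
  swap
  · -- RHS is ⊤
    have hmeasAC : MeasurableSet {s | π s ≪ q} := by
      have := Kernel.measurableSet_absolutelyContinuous κ (Kernel.const S q)
      simpa [hκ, Kernel.const_apply] using this
    have hT : b {s | ¬ π s ≪ q} ≠ 0 := by
      rw [ae_iff] at hAC
      exact hAC
    have htop : (⊤ : ENNReal) ≤ ∫⁻ s, klDiv (π s) q ∂b := by
      calc (⊤ : ENNReal) = ⊤ * b {s | ¬ π s ≪ q} := (ENNReal.top_mul hT).symm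
        _ = ∫⁻ _ in {s | ¬ π s ≪ q}, (⊤ : ENNReal) ∂b := (setLIntegral_const _ _).symm
        _ = ∫⁻ s in {s | ¬ π s ≪ q}, klDiv (π s) q ∂b := by
            refine setLIntegral_congr_fun hmeasAC.compl (fun s hs => ?_)
            rw [hkl, if_neg hs]
        _ ≤ ∫⁻ s, klDiv (π s) q ∂b := setLIntegral_le_lintegral _ _
    exact le_top.trans htop
  -- main case: a.e. s, π s ≪ q
  haveI : IsProbabilityMeasure pb := hpb_prob
  set ρ : A → ENNReal := pb.rnDeriv q with hρ_def
  have hρ_meas : Measurable ρ := Measure.measurable_rnDeriv _ _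
  have h1 : pb ≪ q := by
    refine Measure.AbsolutelyContinuous.mk fun E hE hqE => ?_
    rw [hpb_apply hE,
      lintegral_congr_ae (by filter_upwards [hAC] with s hs using hs hqE), lintegral_zero]
  have h2 : q.withDensity ρ = pb := Measure.withDensity_rnDeriv_eq _ _ h1
  set f : S → A → ENNReal := Kernel.rnDeriv κ (Kernel.const S q) with hf_def
  set u : S → A → ENNReal := Kernel.rnDeriv κ (Kernel.const S pb) with hu_def
  have hf_meas : Measurable (Function.uncurry f) := Kernel.measurable_rnDeriv _ _
  have hu_meas : Measurable (Function.uncurry u) := Kernel.measurable_rnDeriv _ _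
  have hf_ae : ∀ s, f s =ᵐ[q] (π s).rnDeriv q := by
    intro s
    have := Kernel.rnDeriv_eq_rnDeriv_measure (κ := κ) (η := Kernel.const S q) (a := s)
    simpa [hκ, Kernel.const_apply] using this
  have hu_ae : ∀ s, u s =ᵐ[pb] (π s).rnDeriv pb := by
    intro s
    have := Kernel.rnDeriv_eq_rnDeriv_measure (κ := κ) (η := Kernel.const S pb) (a := s)
    simpa [hκ, Kernel.const_apply] using this
  have hfs_meas : ∀ x, Measurable fun s => f s x :=
    fun x => hf_meas.comp (measurable_prodMk_right)
  have hF_meas : Measurable fun x => ∫⁻ s, f s x ∂b :=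
    Measurable.lintegral_prod_left hf_meas
  -- the density of the mixture is the average of the densities
  have hρ_int : ∀ᵐ x ∂q, ∫⁻ s, f s x ∂b = ρ x := by
    refine ae_eq_of_forall_setLIntegral_eq_of_sigmaFinite₀ hF_meas.aemeasurable
      hρ_meas.aemeasurable fun E hE _ => ?_
    rw [Measure.setLIntegral_rnDeriv' h1 hE, hpb_apply hE]
    have hswap : ∫⁻ x in E, ∫⁻ s, f s x ∂b ∂q = ∫⁻ s, ∫⁻ x in E, f s x ∂q ∂b :=
      lintegral_lintegral_swap ((hf_meas.comp measurable_swap).aemeasurable)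
    rw [hswap]
    refine lintegral_congr_ae ?_
    filter_upwards [hAC] with s hs
    rw [lintegral_congr_ae (ae_restrict_of_ae (hf_ae s)),
      Measure.setLIntegral_rnDeriv' hs hE]
  have hNmeas : MeasurableSet {x | ρ x = 0} := hρ_meas (measurableSet_singleton 0)
  have hz : pb {x | ρ x = 0} = 0 := by
    rw [← h2, withDensity_apply _ hNmeas]
    have : ∀ᵐ x ∂(q.restrict {x | ρ x = 0}), ρ x = 0 := by
      rw [ae_restrict_iff' hNmeas]
      exact ae_of_all _ fun x hx => hx
    rw [lintegral_congr_ae this, lintegral_zero]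
  have hρ0 : ∀ᵐ s ∂b, π s {x | ρ x = 0} = 0 := by
    have h := (hpb_apply hNmeas).symm
    rw [hz] at h
    have := (lintegral_eq_zero_iff (by simpa [hκ] using κ.measurable_coe hNmeas)).mp h
    filter_upwards [this] with s hs using hs
  have hACmix : ∀ᵐ s ∂b, π s ≪ pb := by
    filter_upwards [hAC, hρ0] with s hsq hs0
    refine Measure.AbsolutelyContinuous.mk fun E hE hE0 => ?_
    have h2' : ∫⁻ x in E, ρ x ∂q = 0 := by
      rw [Measure.setLIntegral_rnDeriv' h1 hE]; exact hE0
    have hq0 : ∀ᵐ x ∂q, x ∈ E → ρ x = 0 := by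
      have := (lintegral_eq_zero_iff hρ_meas).mp h2'  -- on restrict
      exact (ae_restrict_iff' hE).mp (by filter_upwards [this] with x hx using hx)
    have hqE' : q (E ∩ {x | ρ x = 0}ᶜ) = 0 := by
      refine measure_mono_null ?_ hq0
      intro x hx
      simp only [Set.mem_setOf_eq, Set.mem_compl_iff] at hx ⊢
      exact fun h => hx.2 (h hx.1)
    have hA : π s (E ∩ {x | ρ x = 0}ᶜ) = 0 := hsq hqE'
    have hB : π s (E ∩ {x | ρ x = 0}) = 0 :=
      measure_mono_null Set.inter_subset_right hs0
    have hEeq : E = (E ∩ {x | ρ x = 0}) ∪ (E ∩ {x | ρ x = 0}ᶜ) :=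
      (Set.inter_union_compl E _).symm
    rw [hEeq]
    exact measure_union_null hB hA
  -- a.e. identity u * ρ = f, flipped
  have hset : MeasurableSet {p : S × A | ρ p.2 ≠ 0 → u p.1 p.2 * ρ p.2 = f p.1 p.2} := by
    have h1m : MeasurableSet {p : S × A | ρ p.2 = 0} :=
      (hρ_meas.comp measurable_snd) (measurableSet_singleton 0)
    have h2m : MeasurableSet {p : S × A | u p.1 p.2 * ρ p.2 = f p.1 p.2} :=
      measurableSet_eq_fun (hu_meas.mul (hρ_meas.comp measurable_snd)) hf_meas
    have : {p : S × A | ρ p.2 ≠ 0 → u p.1 p.2 * ρ p.2 = f p.1 p.2}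
        = {p : S × A | ρ p.2 = 0} ∪ {p : S × A | u p.1 p.2 * ρ p.2 = f p.1 p.2} := by
      ext p; by_cases h : ρ p.2 = 0 <;> simp [h]
    rw [this]
    exact h1m.union h2m
  have h_per_s : ∀ᵐ s ∂b, ∀ᵐ x ∂q, ρ x ≠ 0 → u s x * ρ x = f s x := by
    filter_upwards [hAC, hACmix] with s hsq hsmix
    have e1 : ∀ᵐ x ∂q, ρ x ≠ 0 → u s x = (π s).rnDeriv pb x := by
      have h' : ∀ᵐ x ∂(q.withDensity ρ), u s x = (π s).rnDeriv pb x := by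
        rw [h2]; exact hu_ae s
      exact (ae_withDensity_iff hρ_meas).mp h' 
    have e2 : (π s).rnDeriv pb * ρ =ᵐ[q] (π s).rnDeriv q :=
      Measure.rnDeriv_mul_rnDeriv hsmix
    filter_upwards [e1, e2, hf_ae s] with x h1x h2x h3x hρx
    rw [h1x hρx, h3x, ← h2x]
    rfl
  have hu_eq : ∀ᵐ x ∂q, ∀ᵐ s ∂b, ρ x ≠ 0 → u s x * ρ x = f s x :=
    (Measure.ae_ae_comm hset).mp h_per_s
  have hρ_lt : ∀ᵐ x ∂q, ρ x < ⊤ := Measure.rnDeriv_lt_top pb q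
  -- rewrite both sides
  have claimB : ∀ᵐ s ∂b, klDiv (π s) q = ∫⁻ x, Φ (f s x) ∂q := by
    filter_upwards [hAC] with s hs
    rw [hkl, if_pos hs]
    refine lintegral_congr_ae ?_
    filter_upwards [hf_ae s] with x hx
    rw [hx]
  have claimA : ∀ᵐ s ∂b, klDiv (π s) pb = ∫⁻ x, ρ x * Φ (u s x) ∂q := by
    filter_upwards [hACmix] with s hs
    rw [hkl, if_pos hs]
    have e0 : ∫⁻ x, Φ ((π s).rnDeriv pb x) ∂pb = ∫⁻ x, Φ (u s x) ∂pb := by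
      refine lintegral_congr_ae ?_
      filter_upwards [hu_ae s] with x hx
      rw [hx]
    have hmeas' : Measurable fun y => Φ (u s y) :=
      hΦ.comp (hu_meas.comp measurable_prodMk_left)
    rw [e0, ← h2]
    calc ∫⁻ x, Φ (u s x) ∂(q.withDensity ρ)
        = ∫⁻ x, (ρ * fun y => Φ (u s y)) x ∂q :=
          lintegral_withDensity_eq_lintegral_mul q hρ_meas hmeas'
      _ = ∫⁻ x, ρ x * Φ (u s x) ∂q := rfl
  rw [lintegral_congr_ae claimA, lintegral_congr_ae claimB]
  have hswapL : ∫⁻ s, ∫⁻ x, ρ x * Φ (u s x) ∂q ∂b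
      = ∫⁻ x, ∫⁻ s, ρ x * Φ (u s x) ∂b ∂q :=
    lintegral_lintegral_swap
      (((hρ_meas.comp measurable_snd).mul (hΦ.comp hu_meas)).aemeasurable)
  have hswapR : ∫⁻ s, ∫⁻ x, Φ (f s x) ∂q ∂b = ∫⁻ x, ∫⁻ s, Φ (f s x) ∂b ∂q :=
    lintegral_lintegral_swap ((hΦ.comp hf_meas).aemeasurable)
  rw [hswapL, hswapR]
  refine lintegral_mono_ae ?_
  filter_upwards [hρ_int, hu_eq, hρ_lt] with x hx1 hx2 hx3
  by_cases hx0 : ρ x = 0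
  · simp [hx0]
  -- ρ x ∈ (0, ∞)
  set r : ℝ := (ρ x).toReal with hr_def
  have hr : 0 < r := ENNReal.toReal_pos hx0 hx3.ne
  have hu_eq2 : ∀ᵐ s ∂b, u s x = f s x / ρ x := by
    filter_upwards [hx2] with s hs
    exact (ENNReal.eq_div_iff hx0 hx3.ne).mpr (by rw [mul_comm]; exact hs hx0)
  have hL1 : ∫⁻ s, ρ x * Φ (u s x) ∂b = ∫⁻ s, ρ x * Φ (f s x / ρ x) ∂b := by
    refine lintegral_congr_ae ?_
    filter_upwards [hu_eq2] with s hs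
    rw [hs]
  rw [hL1]
  by_cases htop : ∫⁻ s, Φ (f s x) ∂b = ⊤
  · rw [htop]; exact le_top
  -- real-valued computation
  set g : S → ℝ := fun s => (f s x).toReal with hg_def
  have hg_meas : Measurable g := (hfs_meas x).ennreal_toReal
  have hfx_lt : ∀ᵐ s ∂b, f s x < ⊤ :=
    ae_lt_top (hfs_meas x) (by rw [hx1]; exact hx3.ne)
  have hg_int : Integrable g b :=
    integrable_toReal_of_lintegral_ne_top (hfs_meas x).aemeasurable
      (by rw [hx1]; exact hx3.ne)
  have h_intg : ∫ s, g s ∂b = r := by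
    rw [hg_def]
    rw [integral_toReal (hfs_meas x).aemeasurable hfx_lt, hx1]
  set φ : ℝ → ℝ := fun t => t * Real.log t - t + 1 with hφr_def
  have hΦg : (fun s => Φ (f s x)) = fun s => ENNReal.ofReal (φ (g s)) := rfl
  have hφg_meas : Measurable fun s => φ (g s) :=
    ((hg_meas.mul (Real.measurable_log.comp hg_meas)).sub hg_meas).add measurable_const
  have hφg_int : Integrable (fun s => φ (g s)) b := by
    have hm : Measurable fun s => ENNReal.ofReal (φ (g s)) :=
      ENNReal.measurable_ofReal.comp hφg_meas
    have hlint : ∫⁻ s, ENNReal.ofReal (φ (g s)) ∂b ≠ ⊤ := by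
      have he : ∫⁻ s, ENNReal.ofReal (φ (g s)) ∂b = ∫⁻ s, Φ (f s x) ∂b := rfl
      rw [he]; exact htop
    have h := integrable_toReal_of_lintegral_ne_top hm.aemeasurable hlint
    refine h.congr (ae_of_all _ fun s => ?_)
    exact ENNReal.toReal_ofReal (phi_nonneg ENNReal.toReal_nonneg)
  -- pointwise scaling identity
  have hkey : ∀ s, r * φ (g s / r) = φ (g s) - g s * Real.log r + (r - 1) :=
    fun s => phi_scale ENNReal.toReal_nonneg hr
  have hrφ_int : Integrable (fun s => r * φ (g s / r)) b := by
    have : (fun s => r * φ (g s / r))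
        = fun s => φ (g s) - g s * Real.log r + (r - 1) := funext hkey
    rw [this]
    exact (hφg_int.sub (hg_int.mul_const _)).add (integrable_const _)
  have h_intrφ : ∫ s, r * φ (g s / r) ∂b = (∫ s, φ (g s) ∂b) - (r * Real.log r - r + 1) := by
    have i2 : Integrable (fun s => g s * Real.log r) b := hg_int.mul_const _
    have i1 : Integrable (fun s => φ (g s) - g s * Real.log r) b := hφg_int.sub i2
    have e : ∫ s, r * φ (g s / r) ∂b
        = ∫ s, (φ (g s) - g s * Real.log r + (r - 1)) ∂b :=
      integral_congr_ae (ae_of_all _ fun s => hkey s)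
    rw [e, integral_add i1 (integrable_const _), integral_sub hφg_int i2,
      integral_mul_const, h_intg, integral_const, probReal_univ]
    simp only [ENNReal.toReal_one, smul_eq_mul, one_mul]
    ring
  have hle : ∫ s, r * φ (g s / r) ∂b ≤ ∫ s, φ (g s) ∂b := by
    rw [h_intrφ]
    have := phi_nonneg hr.le
    linarith
  -- convert back to lintegrals
  have hLeq : ∫⁻ s, ρ x * Φ (f s x / ρ x) ∂b = ENNReal.ofReal (∫ s, r * φ (g s / r) ∂b) := by
    have hptw : ∀ s, ρ x * Φ (f s x / ρ x) = ENNReal.ofReal (r * φ (g s / r)) := by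
      intro s
      have h1' : (f s x / ρ x).toReal = g s / r := ENNReal.toReal_div _ _
      have h2' : ENNReal.ofReal r = ρ x := by
        rw [hr_def, ENNReal.ofReal_toReal hx3.ne]
      rw [hΦ_def, hφr_def]
      simp only [h1']
      rw [← h2', ← ENNReal.ofReal_mul hr.le]
    simp_rw [hptw]
    rw [← ofReal_integral_eq_lintegral_ofReal hrφ_int
      (ae_of_all _ fun s => mul_nonneg hr.le (phi_nonneg (by positivity)))]
  have hReq : ∫⁻ s, Φ (f s x) ∂b = ENNReal.ofReal (∫ s, φ (g s) ∂b) := by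
    rw [hΦg, ← ofReal_integral_eq_lintegral_ofReal hφg_int
      (ae_of_all _ fun s => phi_nonneg ENNReal.toReal_nonneg)]
  rw [hLeq, hReq]
  exact ENNReal.ofReal_le_ofReal hle
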